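/- Let P = F ⊕ L with F a forest and L a ladder, let π be a linear extension of P and k an element of P. Then the extended promotion ∂_{π^{-1}(k)} π equals the linear extension obtained from π by: deleting k and appending it at the end, then reordering the letters j ⪰ k so as to form a linear extension, swapping the relative order of the two incomparable elements at each size-2 level of the ladder above k. -/

import Mathlib

open Matrix Kronecker
open scoped Classical

namespace PromoMC

/-- A listing of the elements of a finite set `α`. -/
abbrev Listing (α : Type*) [Fintype α] := Fin (Fintype.card α) ≃ α

/-- `π` is a linear extension of the poset `α`: `π i < π j` in `α` implies `i < j`. -/
def IsLinExt {α : Type*} [Fintype α] [PartialOrder α] (π : Listing α) : Prop :=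
  ∀ i j, π i < π j → i < j

variable {α : Type*} [Fintype α] [PartialOrder α]

/-- The operator `τ_i`: swap positions `i` and `i+1` (0-indexed) of a listing when
the corresponding entries are incomparable. -/
noncomputable def tau (i : ℕ) (π : Listing α) : Listing α :=
  if h : i + 1 < Fintype.card α then
    if ¬ π ⟨i, by omega⟩ ≤ π ⟨i + 1, h⟩ ∧ ¬ π ⟨i + 1, h⟩ ≤ π ⟨i, by omega⟩ then
      (Equiv.swap (⟨i, by omega⟩ : Fin (Fintype.card α)) ⟨i + 1, h⟩).trans π
    else π
  else π

/-- The extended promotion operator `∂_i = τ_{n-1} ⋯ τ_{i+1} τ_i` (0-indexed). -/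
noncomputable def promo (i : ℕ) (π : Listing α) : Listing α :=
  ((List.range (Fintype.card α)).drop i).foldl (fun σ j => tau j σ) π

/-- The set of linear extensions of a finite poset. -/
def LinExt (α : Type*) [Fintype α] [PartialOrder α] := {π : Listing α // IsLinExt π}

noncomputable instance : Fintype (LinExt α) := by unfold LinExt; infer_instance

noncomputable instance : DecidableEq (LinExt α) := Classical.decEq _

/-- The transition matrix of the promotion Markov chain: the `(π, π')` entry is the
sum of `x (π i)` over all positions `i` with `∂_i π = π'`. -/
noncomputable def promoMatrix (x : α → ℝ) : Matrix (LinExt α) (LinExt α) ℝ :=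
  fun π π' => ∑ i : Fin (Fintype.card α), if promo (i : ℕ) π.1 = π'.1 then x (π.1 i) else 0

/-- A discrete (antichain) order on a type. -/
def Discrete (β : Type*) := β

instance {β : Type*} : PartialOrder (Discrete β) where
  le a b := a = b
  le_refl _ := rfl
  le_trans _ _ _ h h' := Eq.trans h h'
  le_antisymm _ _ h _ := h

instance {β : Type*} [Fintype β] : Fintype (Discrete β) := inferInstanceAs (Fintype β)
instance {β : Type*} [DecidableEq β] : DecidableEq (Discrete β) := inferInstanceAs (DecidableEq β)

instance {β γ : Type*} [Fintype β] [Fintype γ] : Fintype (β ⊕ₗ γ) :=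
  inferInstanceAs (Fintype (β ⊕ γ))

/-- A ladder with `k` levels, the `i`-th level an antichain of size `(q i) + 1 ∈ {1, 2}`. -/
def Ladder (k : ℕ) (q : Fin k → Fin 2) := Σ i : Fin k, Fin ((q i : ℕ) + 1)

instance {k : ℕ} {q : Fin k → Fin 2} : Fintype (Ladder k q) :=
  inferInstanceAs (Fintype (Σ i : Fin k, Fin ((q i : ℕ) + 1)))

instance {k : ℕ} {q : Fin k → Fin 2} : DecidableEq (Ladder k q) :=
  inferInstanceAs (DecidableEq (Σ i : Fin k, Fin ((q i : ℕ) + 1)))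

instance {k : ℕ} {q : Fin k → Fin 2} : PartialOrder (Ladder k q) where
  le a b := a.1 < b.1 ∨ a = b
  le_refl _ := Or.inr rfl
  le_trans := by
    rintro a b c (h | rfl) (h' | rfl)
    · exact Or.inl (h.trans h')
    · exact Or.inl h
    · exact Or.inl h'
    · exact Or.inr rfl
  le_antisymm := by
    rintro a b (h | rfl) (h' | h2)
    · exact ((lt_asymm h) h').elim
    · exact h2.symm
    · rfl
    · rfl

/-- A rooted forest: every element is covered by at most one element
(has at most one successor). -/
def IsRootedForest (α : Type*) [PartialOrder α] : Prop :=
  ∀ a b c : α, a ⋖ b → a ⋖ c → b = c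

/-- A finite poset is a ladder if it is order-isomorphic to some `Ladder k q`. -/
def IsLadder (α : Type*) [Fintype α] [PartialOrder α] : Prop :=
  ∃ (k : ℕ) (q : Fin k → Fin 2), Nonempty (α ≃o Ladder k q)


section Proof13

lemma tau_of_swap {i : ℕ} (h : i + 1 < Fintype.card α) (π : Listing α)
    (h1 : ¬ π ⟨i, by omega⟩ ≤ π ⟨i + 1, h⟩) (h2 : ¬ π ⟨i + 1, h⟩ ≤ π ⟨i, by omega⟩) :
    tau i π = (Equiv.swap (⟨i, by omega⟩ : Fin (Fintype.card α)) ⟨i + 1, h⟩).trans π := by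
  rw [tau, dif_pos h, if_pos ⟨h1, h2⟩]

lemma tau_of_noswap {i : ℕ} (h : i + 1 < Fintype.card α) (π : Listing α)
    (hc : π ⟨i, by omega⟩ ≤ π ⟨i + 1, h⟩ ∨ π ⟨i + 1, h⟩ ≤ π ⟨i, by omega⟩) :
    tau i π = π := by
  rw [tau, dif_pos h, if_neg (by tauto)]

lemma tau_apply_ne {i : ℕ} (π : Listing α) (p : Fin (Fintype.card α))
    (h1 : (p : ℕ) ≠ i) (h2 : (p : ℕ) ≠ i + 1) : tau i π p = π p := by
  rw [tau]
  split_ifs with h hc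
  · simp only [Equiv.trans_apply]
    rw [Equiv.swap_apply_of_ne_of_ne]
    · exact fun he => h1 (by simpa [Fin.ext_iff] using he)
    · exact fun he => h2 (by simpa [Fin.ext_iff] using he)
  · rfl
  · rfl

lemma swap_adj_lt {n i : ℕ} (h : i + 1 < n) (a b : Fin n)
    (hs : Equiv.swap (⟨i, by omega⟩ : Fin n) ⟨i + 1, h⟩ a < Equiv.swap (⟨i, by omega⟩ : Fin n) ⟨i + 1, h⟩ b)
    (hn : ¬ a < b) : a = ⟨i + 1, h⟩ ∧ b = ⟨i, by omega⟩ := by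
  by_cases ha1 : a = (⟨i, by omega⟩ : Fin n) <;>
  by_cases ha2 : a = (⟨i + 1, h⟩ : Fin n) <;>
  by_cases hb1 : b = (⟨i, by omega⟩ : Fin n) <;>
  by_cases hb2 : b = (⟨i + 1, h⟩ : Fin n) <;>
    simp_all [Equiv.swap_apply_left, Equiv.swap_apply_right, Equiv.swap_apply_of_ne_of_ne,
      Fin.lt_def, Fin.ext_iff] <;> omega

lemma tau_linExt {π : Listing α} (hπ : IsLinExt π) (i : ℕ) : IsLinExt (tau i π) := by
  rw [tau]
  split_ifs with h hc
  · intro a b hab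
    simp only [Equiv.trans_apply] at hab
    have h2 := hπ _ _ hab
    by_contra hn
    obtain ⟨ha, hb⟩ := swap_adj_lt h a b h2 hn
    rw [ha, hb, Equiv.swap_apply_right, Equiv.swap_apply_left] at hab
    exact hc.1 hab.le
  · exact hπ
  · exact hπ

lemma promo_eq_foldl {i : ℕ} (hi : i ≤ Fintype.card α) (π : Listing α) :
    promo i π = (List.range' i (Fintype.card α - i)).foldl (fun σ j => tau j σ) π := by
  rw [promo]
  congr 1
  have h2 : List.range (Fintype.card α) = List.range' 0 i ++ List.range' i (Fintype.card α - i) := by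
    rw [List.range_eq_range']
    have h3 := List.range'_append_1 (s := 0) (m := i) (n := Fintype.card α - i)
    simp only [Nat.zero_add] at h3
    rw [show Fintype.card α = i + (Fintype.card α - i) by omega, ← h3]
    congr 2
    omega
  have hdrop : ∀ (l1 l2 : List ℕ) (k : ℕ), l1.length = k → (l1 ++ l2).drop k = l2 := by
    rintro l1 l2 _ rfl
    exact List.drop_left
  rw [h2, hdrop _ _ i (by simp)]


lemma tau_settle {i : ℕ} (h : i + 1 < Fintype.card α) (σ : Listing α) :
    tau i σ ⟨i, by omega⟩ = σ ⟨i, by omega⟩ ∨ tau i σ ⟨i, by omega⟩ = σ ⟨i + 1, h⟩ := by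
  rw [tau, dif_pos h]
  split_ifs
  · right
    simp [Equiv.swap_apply_left]
  · left
    rfl

/-- The invariant carried along the promotion scan. -/
theorem promo_inv (π : Listing α) (hπ : IsLinExt π) (κ : α)
    (HP1 : ∀ x y z : α, κ ≤ x → κ ≤ y → κ ≤ z → ¬x ≤ y → ¬y ≤ x → ¬x ≤ z → ¬z ≤ x → y = z)
    (g : ℕ → Listing α) (hg0 : g 0 = π)
    (hgs : ∀ j, g (j + 1) = tau ((π.symm κ : ℕ) + j) (g j)) :
    ∀ j (hj : (π.symm κ : ℕ) + j < Fintype.card α),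
      (κ ≤ g j ⟨(π.symm κ : ℕ) + j, hj⟩ ∧
        ∀ w, κ ≤ w → ¬ w ≤ g j ⟨(π.symm κ : ℕ) + j, hj⟩ → ¬ g j ⟨(π.symm κ : ℕ) + j, hj⟩ ≤ w →
          (π.symm (g j ⟨(π.symm κ : ℕ) + j, hj⟩) : ℕ) < (π.symm w : ℕ)) ∧
      (π.symm (g j ⟨(π.symm κ : ℕ) + j, hj⟩) : ℕ) ≤ (π.symm κ : ℕ) + j ∧
      (∀ s, κ ≤ s → (∀ w, κ ≤ w → ¬ w ≤ s → ¬ s ≤ w → (π.symm s : ℕ) < (π.symm w : ℕ)) →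
        (π.symm s : ℕ) ≤ (π.symm κ : ℕ) + j →
        (π.symm s : ℕ) ≤ (π.symm (g j ⟨(π.symm κ : ℕ) + j, hj⟩) : ℕ)) ∧
      (∀ p : Fin (Fintype.card α), (π.symm κ : ℕ) + j < (p : ℕ) → g j p = π p) := by
  set m : ℕ := (π.symm κ : ℕ) with hmdef
  clear_value m
  have hpos : ∀ {x y : α}, x < y → (π.symm x : ℕ) < (π.symm y : ℕ) := by
    intro x y hxy
    exact hπ (π.symm x) (π.symm y) (by simpa using hxy)
  intro j
  induction j with
  | zero =>
    intro hj
    have hc : g 0 ⟨m + 0, hj⟩ = κ := by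
      rw [hg0]
      have : (⟨m + 0, hj⟩ : Fin (Fintype.card α)) = π.symm κ := by
        apply Fin.ext; simp [hmdef]
      rw [this, Equiv.apply_symm_apply]
    rw [hc]
    refine ⟨⟨le_refl κ, fun w hw h1 h2 => absurd hw h2⟩, by simp [hmdef], ?_, ?_⟩
    · intro s hs _ hle
      rcases eq_or_lt_of_le hs with h | h
      · simp [← h, hmdef]
      · have := hpos h
        omega
    · intro p _; rw [hg0]
  | succ j ih =>
    intro hj1
    have hj : m + j < Fintype.card α := by omega
    obtain ⟨⟨hcκ, hcFst⟩, hcle, hmax, hA⟩ := ih hj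
    set c := g j ⟨m + j, hj⟩ with hcdef
    clear_value c
    have hq1 : (m + j) + 1 < Fintype.card α := by omega
    set y := π ⟨(m + j) + 1, hq1⟩ with hydef
    clear_value y
    have hysymm : (π.symm y : ℕ) = (m + j) + 1 := by
      rw [hydef, Equiv.symm_apply_apply]
    have hy : g j ⟨(m + j) + 1, hq1⟩ = y := by
      rw [hydef]
      exact hA ⟨(m + j) + 1, hq1⟩ (Nat.lt_succ_self _)
    have hcney : c ≠ y := by
      intro he
      rw [he, hysymm] at hcle
      omega
    have hyc : ¬ y ≤ c := by
      intro hle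
      rcases eq_or_lt_of_le hle with h | h
      · exact hcney h.symm
      · have := hpos h
        omega
    -- the entry at position m+(j+1) after the step, in both cases
    by_cases hcy : c ≤ y
    · -- no swap
      have hgeq : g (j + 1) = g j := by
        rw [hgs]
        refine tau_of_noswap (α := α) hq1 (g j) (Or.inl ?_)
        rw [hy, ← hcdef]
        exact hcy
      have hclt : c < y := lt_of_le_of_ne hcy hcney
      have hκy : κ ≤ y := le_trans hcκ hcy
      have hc' : g (j + 1) ⟨m + (j + 1), hj1⟩ = y := by
        rw [hgeq, show (⟨m + (j + 1), hj1⟩ : Fin (Fintype.card α)) = ⟨(m + j) + 1, hq1⟩ from rfl]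
        exact hy
      rw [hc']
      refine ⟨⟨hκy, ?_⟩, by omega, ?_, ?_⟩
      · -- Fst y
        intro w hw h1 h2
        by_contra hcon
        push_neg at hcon
        have hwny : w ≠ y := fun he => h1 (he ▸ le_refl w)
        have hwle : (π.symm w : ℕ) ≤ m + j := by
          have : (π.symm w : ℕ) ≠ (m + j) + 1 := by
            intro he
            apply hwny
            apply π.symm.injective
            apply Fin.ext
            rw [he, hysymm]
          omega
        by_cases hwc : w ≤ c
        · exact h1 (le_trans hwc hcy)
        by_cases hcw : c ≤ w
        · have hcnew : c ≠ w := by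
            intro he
            exact h1 (he ▸ hcy)
          have hclw : c < w := lt_of_le_of_ne hcw hcnew
          by_cases hFw : ∀ w', κ ≤ w' → ¬ w' ≤ w → ¬ w ≤ w' → (π.symm w : ℕ) < (π.symm w' : ℕ)
          · have := hmax w hw hFw hwle
            have := hpos hclw
            omega
          · push_neg at hFw
            obtain ⟨w', hw'κ, hw'1, hw'2, hw'3⟩ := hFw
            have : w' = y := HP1 w w' y hw hw'κ hκy hw'2 hw'1 h1 h2
            rw [this, hysymm] at hw'3
            omega
        · have : c = y := HP1 w c y hw hcκ hκy hwc hcw h1 h2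
          exact hcney this
      · -- max
        intro s hs hFs hsle
        rcases Nat.lt_succ_iff_lt_or_eq.mp (by omega : (π.symm s : ℕ) < (m + j) + 2) with h | h
        · have h1 := hmax s hs hFs (by omega)
          have h2 := hpos hclt
          omega
        · omega
      · intro p hp
        rw [hgeq]
        exact hA p (by omega)
    · -- swap
      have hswap : g (j + 1) =
          (Equiv.swap (⟨m + j, by omega⟩ : Fin (Fintype.card α)) ⟨(m + j) + 1, hq1⟩).trans (g j) := by
        rw [hgs]
        exact tau_of_swap (α := α) hq1 (g j) (by rw [hy, ← hcdef]; exact hcy) (by rw [hy, ← hcdef]; exact hyc)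
      have hc' : g (j + 1) ⟨m + (j + 1), hj1⟩ = c := by
        rw [hswap]
        simp only [Equiv.trans_apply]
        rw [show (⟨m + (j + 1), hj1⟩ : Fin (Fintype.card α)) = ⟨(m + j) + 1, hq1⟩ from rfl,
          Equiv.swap_apply_right]
        exact hcdef.symm
      rw [hc']
      refine ⟨⟨hcκ, hcFst⟩, by omega, ?_, ?_⟩
      · intro s hs hFs hsle
        rcases Nat.lt_succ_iff_lt_or_eq.mp (by omega : (π.symm s : ℕ) < (m + j) + 2) with h | h
        · exact hmax s hs hFs (by omega)
        · -- s = y, but y is not "first": its partner c comes before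
          have hsy : s = y := by
            apply π.symm.injective
            apply Fin.ext
            rw [h, hysymm]
          subst hsy
          have := hFs c hcκ hcy hyc
          omega
      · intro p hp
        rw [hswap]
        simp only [Equiv.trans_apply]
        rw [Equiv.swap_apply_of_ne_of_ne]
        · exact hA p (by omega)
        · intro he
          rw [he] at hp
          simp only [Fin.val_mk] at hp
          omega
        · intro he
          rw [he] at hp
          simp only [Fin.val_mk] at hp
          omega

theorem promo_main (π : Listing α) (hπ : IsLinExt π) (κ : α)
    (HP1 : ∀ x y z : α, κ ≤ x → κ ≤ y → κ ≤ z → ¬x ≤ y → ¬y ≤ x → ¬x ≤ z → ¬z ≤ x → y = z)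
    (HP2 : ∀ x y z : α, κ ≤ x → κ ≤ y → ¬x ≤ y → ¬y ≤ x → x < z → y < z) :
    IsLinExt (promo ((π.symm κ : Fin (Fintype.card α)) : ℕ) π) ∧
    (∀ a : α, ¬ κ ≤ a →
      (π.symm a < π.symm κ →
        (promo ((π.symm κ : Fin (Fintype.card α)) : ℕ) π).symm a = π.symm a) ∧
      (π.symm κ < π.symm a →
        (((promo ((π.symm κ : Fin (Fintype.card α)) : ℕ) π).symm a : ℕ)
          = (π.symm a : ℕ) - 1))) ∧
    (∀ u v : α, κ ≤ u → κ ≤ v → ¬ u ≤ v → ¬ v ≤ u →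
      ((promo ((π.symm κ : Fin (Fintype.card α)) : ℕ) π).symm u
          < (promo ((π.symm κ : Fin (Fintype.card α)) : ℕ) π).symm v
        ↔ π.symm v < π.symm u)) := by
  have hcard : ((π.symm κ : Fin (Fintype.card α)) : ℕ) < Fintype.card α := (π.symm κ).isLt
  have hpos : ∀ {x y : α}, x < y → (π.symm x : ℕ) < (π.symm y : ℕ) := by
    intro x y hxy
    exact hπ (π.symm x) (π.symm y) (by simpa using hxy)
  obtain ⟨g, hg0, hgs, hfold⟩ :
      ∃ g : ℕ → Listing α, g 0 = π ∧
        (∀ j, g (j + 1) = tau ((π.symm κ : ℕ) + j) (g j)) ∧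
        promo ((π.symm κ : ℕ)) π = g (Fintype.card α - (π.symm κ : ℕ)) := by
    refine ⟨fun j => (List.range' (π.symm κ : ℕ) j).foldl (fun σ i => tau i σ) π, rfl, ?_, ?_⟩
    · intro j
      show (List.range' ((π.symm κ : ℕ)) (j+1)).foldl (fun σ i => tau i σ) π = _
      rw [List.range'_1_concat, List.foldl_append, List.foldl_cons, List.foldl_nil]
    · exact promo_eq_foldl hcard.le π
  have hInv := promo_inv π hπ κ HP1 g hg0 hgs
  have hstab : ∀ j k, j ≤ k → ∀ p : Fin (Fintype.card α),
      (p : ℕ) < (π.symm κ : ℕ) + j → g k p = g j p := by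
    intro j k hjk
    induction k with
    | zero =>
      intro p _
      have : j = 0 := by omega
      rw [this]
    | succ k ih =>
      intro p hp
      by_cases hje : j = k + 1
      · rw [hje]
      · have hjk' : j ≤ k := by omega
        rw [hgs k, tau_apply_ne (g k) p (by omega) (by omega)]
        exact ih hjk' p hp
  have hfinal : ∀ (j : ℕ) (p : Fin (Fintype.card α)), (p : ℕ) < (π.symm κ : ℕ) + j →
      j ≤ Fintype.card α - (π.symm κ : ℕ) → promo ((π.symm κ : ℕ)) π p = g j p := by
    intro j p h1 h2
    rw [hfold]
    exact hstab j _ h2 p h1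
  have hlinall : ∀ j, IsLinExt (g j) := by
    intro j
    induction j with
    | zero => rw [hg0]; exact hπ
    | succ j ih => rw [hgs]; exact tau_linExt ih _
  refine ⟨by rw [hfold]; exact hlinall _, ?_, ?_⟩
  · -- elements not above κ keep (shifted) position
    intro a ha
    constructor
    · intro hlt
      have hv : (π.symm a : ℕ) < (π.symm κ : ℕ) := hlt
      have h1 : promo ((π.symm κ : ℕ)) π (π.symm a) = a := by
        rw [hfinal 0 (π.symm a) (by omega) (by omega), hg0, Equiv.apply_symm_apply]
      exact (Equiv.symm_apply_eq _).mpr h1.symm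
    · intro hlt
      have hv : (π.symm κ : ℕ) < (π.symm a : ℕ) := hlt
      have hpan : (π.symm a : ℕ) < Fintype.card α := (π.symm a).isLt
      have hj0 : (π.symm κ : ℕ) + ((π.symm a : ℕ) - 1 - (π.symm κ : ℕ)) < Fintype.card α := by omega
      have hq1 : (π.symm κ : ℕ) + ((π.symm a : ℕ) - 1 - (π.symm κ : ℕ)) + 1 < Fintype.card α := by
        omega
      obtain ⟨⟨hcκ, hcFst⟩, hcle, hmax, hA⟩ := hInv ((π.symm a : ℕ) - 1 - (π.symm κ : ℕ)) hj0
      have hmka : (⟨(π.symm κ : ℕ) + ((π.symm a : ℕ) - 1 - (π.symm κ : ℕ)) + 1, hq1⟩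
          : Fin (Fintype.card α)) = π.symm a := Fin.ext (by
        show (π.symm κ : ℕ) + ((π.symm a : ℕ) - 1 - (π.symm κ : ℕ)) + 1 = (π.symm a : ℕ)
        omega)
      have hyv : g ((π.symm a : ℕ) - 1 - (π.symm κ : ℕ))
          ⟨(π.symm κ : ℕ) + ((π.symm a : ℕ) - 1 - (π.symm κ : ℕ)) + 1, hq1⟩ = a := by
        rw [hA ⟨(π.symm κ : ℕ) + ((π.symm a : ℕ) - 1 - (π.symm κ : ℕ)) + 1, hq1⟩
          (Nat.lt_succ_self _), hmka, Equiv.apply_symm_apply]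
      have hswap : g ((π.symm a : ℕ) - 1 - (π.symm κ : ℕ) + 1) =
          (Equiv.swap (⟨(π.symm κ : ℕ) + ((π.symm a : ℕ) - 1 - (π.symm κ : ℕ)), by omega⟩ :
              Fin (Fintype.card α))
            ⟨(π.symm κ : ℕ) + ((π.symm a : ℕ) - 1 - (π.symm κ : ℕ)) + 1, hq1⟩).trans
            (g ((π.symm a : ℕ) - 1 - (π.symm κ : ℕ))) := by
        rw [hgs]
        refine tau_of_swap (α := α) hq1 _ ?_ ?_
        · rw [hyv]
          intro hle
          exact ha (le_trans hcκ hle)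
        · rw [hyv]
          intro hle
          rcases eq_or_lt_of_le hle with he | hl
          · exact ha (he ▸ hcκ)
          · have := hpos hl
            omega
      have hset : g ((π.symm a : ℕ) - 1 - (π.symm κ : ℕ) + 1)
          ⟨(π.symm κ : ℕ) + ((π.symm a : ℕ) - 1 - (π.symm κ : ℕ)), by omega⟩ = a := by
        rw [hswap]
        simp only [Equiv.trans_apply, Equiv.swap_apply_left]
        exact hyv
      have hfin2 : promo ((π.symm κ : ℕ)) π
          ⟨(π.symm κ : ℕ) + ((π.symm a : ℕ) - 1 - (π.symm κ : ℕ)), by omega⟩ = a := by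
        have := hfinal ((π.symm a : ℕ) - 1 - (π.symm κ : ℕ) + 1)
          ⟨(π.symm κ : ℕ) + ((π.symm a : ℕ) - 1 - (π.symm κ : ℕ)), by omega⟩
          (by show (π.symm κ : ℕ) + ((π.symm a : ℕ) - 1 - (π.symm κ : ℕ)) <
                (π.symm κ : ℕ) + ((π.symm a : ℕ) - 1 - (π.symm κ : ℕ) + 1)
              omega)
          (by omega)
        rw [this]
        exact hset
      rw [show (promo ((π.symm κ : ℕ)) π).symm a =
        ⟨(π.symm κ : ℕ) + ((π.symm a : ℕ) - 1 - (π.symm κ : ℕ)), by omega⟩ from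
        (Equiv.symm_apply_eq _).mpr hfin2.symm]
      simp only [Fin.val_mk]
      omega
  · -- incomparable pairs above κ reverse
    have main : ∀ u v : α, κ ≤ u → κ ≤ v → ¬ u ≤ v → ¬ v ≤ u →
        (π.symm u : ℕ) < (π.symm v : ℕ) →
        ((promo ((π.symm κ : ℕ)) π).symm v : ℕ) < ((promo ((π.symm κ : ℕ)) π).symm u : ℕ) := by
      intro u v hu hv huv hvu hpuv
      have hκu : κ < u := by
        rcases eq_or_lt_of_le hu with he | h
        · exact absurd (he ▸ hv) huv
        · exact h
      have hmu : (π.symm κ : ℕ) < (π.symm u : ℕ) := hpos hκu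
      have hpvn : (π.symm v : ℕ) < Fintype.card α := (π.symm v).isLt
      have hFstu : ∀ w, κ ≤ w → ¬ w ≤ u → ¬ u ≤ w → (π.symm u : ℕ) < (π.symm w : ℕ) := by
        intro w hw h1 h2
        have : w = v := HP1 u w v hu hw hv h2 h1 huv hvu
        rw [this]
        exact hpuv
      have hbetween : ∀ s, κ ≤ s → (π.symm u : ℕ) < (π.symm s : ℕ) →
          (π.symm s : ℕ) < (π.symm v : ℕ) → False := by
        intro s hs h1 h2
        by_cases hsu : s ≤ u
        · rcases eq_or_lt_of_le hsu with he | hl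
          · rw [he] at h1; omega
          · have := hpos hl; omega
        · by_cases hus : u ≤ s
          · have hlt : u < s := lt_of_le_of_ne hus (fun he => hsu (le_of_eq he.symm))
            have := hpos (HP2 u v s hu hv huv hvu hlt)
            omega
          · have : s = v := HP1 u s v hu hs hv hus hsu huv hvu
            rw [this] at h2; omega
      have htoken : ∀ j (hj : (π.symm κ : ℕ) + j < Fintype.card α),
          (π.symm u : ℕ) ≤ (π.symm κ : ℕ) + j → (π.symm κ : ℕ) + j < (π.symm v : ℕ) →
          g j ⟨(π.symm κ : ℕ) + j, hj⟩ = u := by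
        intro j hj h1 h2
        obtain ⟨⟨hcκ, hcFst⟩, hcle, hmax, hA⟩ := hInv j hj
        have h3 := hmax u hu hFstu h1
        rcases eq_or_lt_of_le h3 with he | hl
        · apply π.symm.injective
          exact Fin.ext he.symm
        · exact absurd (hbetween _ hcκ hl (by omega)) not_false
      -- the position of v in the result is (π.symm v) - 1
      have hj1 : (π.symm κ : ℕ) + ((π.symm v : ℕ) - 1 - (π.symm κ : ℕ)) < Fintype.card α := by
        omega
      have hq1 : (π.symm κ : ℕ) + ((π.symm v : ℕ) - 1 - (π.symm κ : ℕ)) + 1 < Fintype.card α := by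
        omega
      have htok := htoken _ hj1 (by omega) (by omega)
      obtain ⟨-, -, -, hA1⟩ := hInv _ hj1
      have hmkv : (⟨(π.symm κ : ℕ) + ((π.symm v : ℕ) - 1 - (π.symm κ : ℕ)) + 1, hq1⟩
          : Fin (Fintype.card α)) = π.symm v := Fin.ext (by
        show (π.symm κ : ℕ) + ((π.symm v : ℕ) - 1 - (π.symm κ : ℕ)) + 1 = (π.symm v : ℕ)
        omega)
      have hyv : g ((π.symm v : ℕ) - 1 - (π.symm κ : ℕ))
          ⟨(π.symm κ : ℕ) + ((π.symm v : ℕ) - 1 - (π.symm κ : ℕ)) + 1, hq1⟩ = v := by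
        rw [hA1 ⟨(π.symm κ : ℕ) + ((π.symm v : ℕ) - 1 - (π.symm κ : ℕ)) + 1, hq1⟩
          (Nat.lt_succ_self _), hmkv, Equiv.apply_symm_apply]
      have hswap : g ((π.symm v : ℕ) - 1 - (π.symm κ : ℕ) + 1) =
          (Equiv.swap (⟨(π.symm κ : ℕ) + ((π.symm v : ℕ) - 1 - (π.symm κ : ℕ)), by omega⟩ :
              Fin (Fintype.card α))
            ⟨(π.symm κ : ℕ) + ((π.symm v : ℕ) - 1 - (π.symm κ : ℕ)) + 1, hq1⟩).trans
            (g ((π.symm v : ℕ) - 1 - (π.symm κ : ℕ))) := by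
        rw [hgs]
        refine tau_of_swap (α := α) hq1 _ ?_ ?_
        · rw [hyv, htok]; exact huv
        · rw [hyv, htok]; exact hvu
      have hset : g ((π.symm v : ℕ) - 1 - (π.symm κ : ℕ) + 1)
          ⟨(π.symm κ : ℕ) + ((π.symm v : ℕ) - 1 - (π.symm κ : ℕ)), by omega⟩ = v := by
        rw [hswap]
        simp only [Equiv.trans_apply, Equiv.swap_apply_left]
        exact hyv
      have hfv : promo ((π.symm κ : ℕ)) π
          ⟨(π.symm κ : ℕ) + ((π.symm v : ℕ) - 1 - (π.symm κ : ℕ)), by omega⟩ = v := by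
        have := hfinal ((π.symm v : ℕ) - 1 - (π.symm κ : ℕ) + 1)
          ⟨(π.symm κ : ℕ) + ((π.symm v : ℕ) - 1 - (π.symm κ : ℕ)), by omega⟩
          (by show (π.symm κ : ℕ) + ((π.symm v : ℕ) - 1 - (π.symm κ : ℕ)) <
                (π.symm κ : ℕ) + ((π.symm v : ℕ) - 1 - (π.symm κ : ℕ) + 1)
              omega)
          (by omega)
        rw [this]
        exact hset
      have hsymv : ((promo ((π.symm κ : ℕ)) π).symm v : ℕ) = (π.symm v : ℕ) - 1 := by
        rw [show (promo ((π.symm κ : ℕ)) π).symm v =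
          ⟨(π.symm κ : ℕ) + ((π.symm v : ℕ) - 1 - (π.symm κ : ℕ)), by omega⟩ from
          (Equiv.symm_apply_eq _).mpr hfv.symm]
        simp only [Fin.val_mk]
        omega
      -- u never lands at a position < π.symm v
      have hnotu : ∀ p : Fin (Fintype.card α), (p : ℕ) < (π.symm v : ℕ) →
          promo ((π.symm κ : ℕ)) π p ≠ u := by
        intro p hp
        by_cases hpm : (p : ℕ) < (π.symm κ : ℕ)
        · rw [hfinal 0 p (by omega) (by omega), hg0]
          intro he
          have : p = π.symm u := by rw [← he, Equiv.symm_apply_apply]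
          have := congrArg Fin.val this
          omega
        · push_neg at hpm
          by_cases hplast : (p : ℕ) = (π.symm v : ℕ) - 1
          · rw [show p = ⟨(π.symm κ : ℕ) + ((π.symm v : ℕ) - 1 - (π.symm κ : ℕ)), by omega⟩ from
              Fin.ext (by simp only [Fin.val_mk]; omega), hfv]
            intro he
            exact hvu he.le
          · have hppv : (p : ℕ) < (π.symm v : ℕ) - 1 := by omega
            have hj2 : (π.symm κ : ℕ) + ((p : ℕ) - (π.symm κ : ℕ)) < Fintype.card α := by omega
            have hqp1 : (π.symm κ : ℕ) + ((p : ℕ) - (π.symm κ : ℕ)) + 1 < Fintype.card α := by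
              omega
            obtain ⟨⟨hcκ, hcFst⟩, hcle, hmax, hA⟩ := hInv ((p : ℕ) - (π.symm κ : ℕ)) hj2
            have hy2 : g ((p : ℕ) - (π.symm κ : ℕ))
                ⟨(π.symm κ : ℕ) + ((p : ℕ) - (π.symm κ : ℕ)) + 1, hqp1⟩ =
                π ⟨(π.symm κ : ℕ) + ((p : ℕ) - (π.symm κ : ℕ)) + 1, hqp1⟩ :=
              hA _ (Nat.lt_succ_self _)
            have hy2symm : (π.symm (π ⟨(π.symm κ : ℕ) + ((p : ℕ) - (π.symm κ : ℕ)) + 1, hqp1⟩) : ℕ)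
                = (π.symm κ : ℕ) + ((p : ℕ) - (π.symm κ : ℕ)) + 1 := by
              rw [Equiv.symm_apply_apply]
            have hfp : promo ((π.symm κ : ℕ)) π p = g ((p : ℕ) - (π.symm κ : ℕ) + 1) p :=
              hfinal _ p (by omega) (by omega)
            have hpmk : p = ⟨(π.symm κ : ℕ) + ((p : ℕ) - (π.symm κ : ℕ)), hj2⟩ :=
              Fin.ext (by simp only [Fin.val_mk]; omega)
            by_cases hcase : (π.symm u : ℕ) ≤ (p : ℕ)
            · -- token is u and it swaps past a non-κ-above element
              have htokp := htoken _ hj2 (by omega) (by omega)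
              have hyNS : ¬ κ ≤ π ⟨(π.symm κ : ℕ) + ((p : ℕ) - (π.symm κ : ℕ)) + 1, hqp1⟩ := by
                intro hk
                exact hbetween _ hk (by omega) (by omega)
              have hswap2 : g ((p : ℕ) - (π.symm κ : ℕ) + 1) =
                  (Equiv.swap (⟨(π.symm κ : ℕ) + ((p : ℕ) - (π.symm κ : ℕ)), by omega⟩ :
                      Fin (Fintype.card α))
                    ⟨(π.symm κ : ℕ) + ((p : ℕ) - (π.symm κ : ℕ)) + 1, hqp1⟩).trans
                    (g ((p : ℕ) - (π.symm κ : ℕ))) := by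
                rw [hgs]
                refine tau_of_swap (α := α) hqp1 _ ?_ ?_
                · rw [hy2, htokp]
                  intro hle
                  exact hyNS (le_trans hu hle)
                · rw [hy2, htokp]
                  intro hle
                  rcases eq_or_lt_of_le hle with he | hl
                  · have := congrArg (fun z => (π.symm z : ℕ)) he
                    simp only [hy2symm] at this
                    omega
                  · have := hpos hl
                    omega
              have hvalue : g ((p : ℕ) - (π.symm κ : ℕ) + 1)
                  ⟨(π.symm κ : ℕ) + ((p : ℕ) - (π.symm κ : ℕ)), hj2⟩ =
                  π ⟨(π.symm κ : ℕ) + ((p : ℕ) - (π.symm κ : ℕ)) + 1, hqp1⟩ := by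
                rw [hswap2]
                simp only [Equiv.trans_apply, Equiv.swap_apply_left]
                exact hy2
              rw [← hpmk] at hvalue
              rw [hfp, hvalue]
              intro he
              have := congrArg (fun z => (π.symm z : ℕ)) he
              simp only [hy2symm] at this
              omega
            · push_neg at hcase
              by_cases hpu1 : (π.symm κ : ℕ) + ((p : ℕ) - (π.symm κ : ℕ)) + 1 = (π.symm u : ℕ)
              · -- next element is u itself; token is comparable to u, so no swap
                have hyu : g ((p : ℕ) - (π.symm κ : ℕ))
                    ⟨(π.symm κ : ℕ) + ((p : ℕ) - (π.symm κ : ℕ)) + 1, hqp1⟩ = u := by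
                  rw [hy2, show (⟨(π.symm κ : ℕ) + ((p : ℕ) - (π.symm κ : ℕ)) + 1, hqp1⟩
                    : Fin (Fintype.card α)) = π.symm u from
                    Fin.ext (by simp only [Fin.val_mk]; omega), Equiv.apply_symm_apply]
                have hcu : g ((p : ℕ) - (π.symm κ : ℕ))
                      ⟨(π.symm κ : ℕ) + ((p : ℕ) - (π.symm κ : ℕ)), hj2⟩ ≤ u ∨
                    u ≤ g ((p : ℕ) - (π.symm κ : ℕ))
                      ⟨(π.symm κ : ℕ) + ((p : ℕ) - (π.symm κ : ℕ)), hj2⟩ := by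
                  by_contra hcon
                  push_neg at hcon
                  have hcv : g ((p : ℕ) - (π.symm κ : ℕ))
                      ⟨(π.symm κ : ℕ) + ((p : ℕ) - (π.symm κ : ℕ)), hj2⟩ = v :=
                    HP1 u _ v hu hcκ hv hcon.2 hcon.1 huv hvu
                  rw [hcv] at hcle
                  omega
                have hnos : g ((p : ℕ) - (π.symm κ : ℕ) + 1) = g ((p : ℕ) - (π.symm κ : ℕ)) := by
                  rw [hgs]
                  rcases hcu with h | h
                  · exact tau_of_noswap (α := α) hqp1 _ (Or.inl (by rw [hyu]; exact h))
                  · exact tau_of_noswap (α := α) hqp1 _ (Or.inr (by rw [hyu]; exact h))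
                have hvalue : g ((p : ℕ) - (π.symm κ : ℕ) + 1)
                    ⟨(π.symm κ : ℕ) + ((p : ℕ) - (π.symm κ : ℕ)), hj2⟩ =
                    g ((p : ℕ) - (π.symm κ : ℕ))
                    ⟨(π.symm κ : ℕ) + ((p : ℕ) - (π.symm κ : ℕ)), hj2⟩ := by rw [hnos]
                rw [← hpmk] at hvalue hcle
                rw [hfp, hvalue]
                intro he
                rw [he] at hcle
                omega
              · -- either way the settled value is not u
                have hdisj := tau_settle (α := α) hqp1 (g ((p : ℕ) - (π.symm κ : ℕ)))
                rw [← hgs] at hdisj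
                rcases hdisj with h | h
                · have hvalue : g ((p : ℕ) - (π.symm κ : ℕ) + 1)
                      ⟨(π.symm κ : ℕ) + ((p : ℕ) - (π.symm κ : ℕ)), hj2⟩ =
                      g ((p : ℕ) - (π.symm κ : ℕ))
                      ⟨(π.symm κ : ℕ) + ((p : ℕ) - (π.symm κ : ℕ)), hj2⟩ := h
                  rw [← hpmk] at hvalue hcle
                  rw [hfp, hvalue]
                  intro he
                  rw [he] at hcle
                  omega
                · have hvalue : g ((p : ℕ) - (π.symm κ : ℕ) + 1)
                      ⟨(π.symm κ : ℕ) + ((p : ℕ) - (π.symm κ : ℕ)), hj2⟩ =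
                      π ⟨(π.symm κ : ℕ) + ((p : ℕ) - (π.symm κ : ℕ)) + 1, hqp1⟩ := by
                    rw [h]
                    exact hy2
                  rw [← hpmk] at hvalue
                  rw [hfp, hvalue]
                  intro he
                  have := congrArg (fun z => (π.symm z : ℕ)) he
                  simp only [hy2symm] at this
                  omega
      have hsymu : (π.symm v : ℕ) ≤ ((promo ((π.symm κ : ℕ)) π).symm u : ℕ) := by
        by_contra h
        push_neg at h
        exact hnotu _ h (Equiv.apply_symm_apply _ u)
      omega
    intro u v hu hv huv hvu
    constructor
    · intro h
      have hval : ((promo ((π.symm κ : ℕ)) π).symm u : ℕ) <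
          ((promo ((π.symm κ : ℕ)) π).symm v : ℕ) := h
      rcases lt_trichotomy (π.symm u : ℕ) (π.symm v : ℕ) with hlt | heq | hgt
      · have := main u v hu hv huv hvu hlt
        omega
      · exact absurd (π.symm.injective (Fin.ext heq) ▸ huv) (fun hh => hh le_rfl)
      · exact hgt
    · intro h
      have := main v u hv hu hvu huv h
      exact this

lemma ladder_le_iff {k : ℕ} {q : Fin k → Fin 2} (x y : Ladder k q) :
    x ≤ y ↔ x.1 < y.1 ∨ x = y := Iff.rfl

lemma ladder_incomp_fst {k : ℕ} {q : Fin k → Fin 2} {x y : Ladder k q}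
    (h1 : ¬ x ≤ y) (h2 : ¬ y ≤ x) : x.1 = y.1 := by
  rw [ladder_le_iff] at h1 h2
  push_neg at h1 h2
  rcases lt_trichotomy x.1 y.1 with h | h | h
  · exact absurd h (not_lt.mpr h1.1)
  · exact h
  · exact absurd h (not_lt.mpr h2.1)

lemma ladder_P1 {k : ℕ} {q : Fin k → Fin 2} (x y z : Ladder k q)
    (hxy : ¬ x ≤ y) (hyx : ¬ y ≤ x) (hxz : ¬ x ≤ z) (hzx : ¬ z ≤ x) : y = z := by
  have h1 : x.1 = y.1 := ladder_incomp_fst hxy hyx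
  have h2 : x.1 = z.1 := ladder_incomp_fst hxz hzx
  obtain ⟨i, a⟩ := x
  obtain ⟨j, b⟩ := y
  obtain ⟨j', c⟩ := z
  simp only at h1 h2
  subst h1
  subst h2
  have hne1 : b ≠ a := by
    intro he
    subst he
    exact hxy (Or.inr rfl)
  have hne2 : c ≠ a := by
    intro he
    subst he
    exact hxz (Or.inr rfl)
  have hq : ((q i : ℕ)) < 2 := (q i).isLt
  have hb := b.isLt
  have hc := c.isLt
  have ha := a.isLt
  have hbv : (b : ℕ) ≠ (a : ℕ) := fun h => hne1 (Fin.ext h)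
  have hcv : (c : ℕ) ≠ (a : ℕ) := fun h => hne2 (Fin.ext h)
  have : (b : ℕ) = (c : ℕ) := by omega
  rw [show b = c from Fin.ext this]

lemma ladder_P2 {k : ℕ} {q : Fin k → Fin 2} (x y z : Ladder k q)
    (hxy : ¬ x ≤ y) (hyx : ¬ y ≤ x) (hxz : x < z) : y < z := by
  have h1 : x.1 = y.1 := ladder_incomp_fst hxy hyx
  have hxz' : x.1 < z.1 := by
    rcases (ladder_le_iff x z).mp hxz.le with h | h
    · exact h
    · exact absurd h hxz.ne
  have hyz : y ≤ z := Or.inl (h1 ▸ hxz')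
  refine lt_of_le_of_ne hyz ?_
  intro he
  subst he
  exact hxy hxz.le

-- chains in a rooted forest
lemma forest_chain {F : Type*} [Fintype F] [PartialOrder F] (hF : IsRootedForest F) :
    ∀ a b c : F, a ≤ b → a ≤ c → b ≤ c ∨ c ≤ b := by
  intro a
  refine ((IsWellFounded.wf : WellFounded ((· > ·) : F → F → Prop))).induction
    (C := fun a => ∀ b c : F, a ≤ b → a ≤ c → b ≤ c ∨ c ≤ b) a ?_
  intro x IH b c hxb hxc
  rcases eq_or_lt_of_le hxb with rfl | hb
  · exact Or.inl hxc
  rcases eq_or_lt_of_le hxc with rfl | hc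
  · exact Or.inr hxb
  obtain ⟨b', hxb', hb'b⟩ := exists_covBy_le_of_lt hb
  obtain ⟨c', hxc', hc'c⟩ := exists_covBy_le_of_lt hc
  have hbc : b' = c' := hF x b' c' hxb' hxc'
  exact IH b' hxb'.lt b c hb'b (hbc ▸ hc'c)

section SumLex
variable {F L : Type} [Fintype F] [PartialOrder F] [Fintype L] [PartialOrder L]

lemma sum_pair (hF : IsRootedForest F) (κ x y : F ⊕ₗ L)
    (hx : κ ≤ x) (hy : κ ≤ y) (hxy : ¬ x ≤ y) (hyx : ¬ y ≤ x) :
    ∃ a b : L, x = toLex (Sum.inr a) ∧ y = toLex (Sum.inr b) := by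
  rcases x with fx | lx
  · rcases y with fy | ly
    · -- both inl: κ must be inl, and the up-set of a forest element is a chain
      rcases κ with kf | kl
      · have h1 : kf ≤ fx := Sum.Lex.inl_le_inl_iff.mp hx
        have h2 : kf ≤ fy := Sum.Lex.inl_le_inl_iff.mp hy
        rcases forest_chain hF kf fx fy h1 h2 with h | h
        · exact absurd (Sum.Lex.inl_le_inl_iff.mpr h) hxy
        · exact absurd (Sum.Lex.inl_le_inl_iff.mpr h) hyx
      · exact absurd hx Sum.Lex.not_inr_le_inl
    · exact absurd (Sum.Lex.inl_le_inr fx ly) hxy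
  · rcases y with fy | ly
    · exact absurd (Sum.Lex.inl_le_inr fy lx) hyx
    · exact ⟨lx, ly, rfl, rfl⟩

lemma sum_HP1 (hF : IsRootedForest F) (hL : IsLadder L) (κ : F ⊕ₗ L) :
    ∀ x y z : F ⊕ₗ L, κ ≤ x → κ ≤ y → κ ≤ z →
      ¬ x ≤ y → ¬ y ≤ x → ¬ x ≤ z → ¬ z ≤ x → y = z := by
  obtain ⟨k, q, ⟨e⟩⟩ := hL
  intro x y z hx hy hz hxy hyx hxz hzx
  obtain ⟨a, b, rfl, rfl⟩ := sum_pair hF κ x y hx hy hxy hyx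
  obtain ⟨a', c, ha', rfl⟩ := sum_pair hF κ (toLex (Sum.inr a)) z hx hz hxz hzx
  have hbc : b = c := by
    have h1 : ¬ a ≤ b := fun h => hxy (Sum.Lex.inr_le_inr_iff.mpr h)
    have h2 : ¬ b ≤ a := fun h => hyx (Sum.Lex.inr_le_inr_iff.mpr h)
    have h3 : ¬ a ≤ c := fun h => hxz (Sum.Lex.inr_le_inr_iff.mpr h)
    have h4 : ¬ c ≤ a := fun h => hzx (Sum.Lex.inr_le_inr_iff.mpr h)
    have := ladder_P1 (e a) (e b) (e c)
      (fun h => h1 (e.le_iff_le.mp h)) (fun h => h2 (e.le_iff_le.mp h))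
      (fun h => h3 (e.le_iff_le.mp h)) (fun h => h4 (e.le_iff_le.mp h))
    exact e.injective this
  rw [hbc]

lemma sum_HP2 (hF : IsRootedForest F) (hL : IsLadder L) (κ : F ⊕ₗ L) :
    ∀ x y z : F ⊕ₗ L, κ ≤ x → κ ≤ y →
      ¬ x ≤ y → ¬ y ≤ x → x < z → y < z := by
  obtain ⟨k, q, ⟨e⟩⟩ := hL
  intro x y z hx hy hxy hyx hxz
  obtain ⟨a, b, rfl, rfl⟩ := sum_pair hF κ x y hx hy hxy hyx
  rcases z with fz | lz
  · exact absurd hxz.le Sum.Lex.not_inr_le_inl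
  · have hac : a < lz := Sum.Lex.inr_lt_inr_iff.mp hxz
    have h1 : ¬ a ≤ b := fun h => hxy (Sum.Lex.inr_le_inr_iff.mpr h)
    have h2 : ¬ b ≤ a := fun h => hyx (Sum.Lex.inr_le_inr_iff.mpr h)
    have := ladder_P2 (e a) (e b) (e lz)
      (fun h => h1 (e.le_iff_le.mp h)) (fun h => h2 (e.le_iff_le.mp h))
      (e.lt_iff_lt.mpr hac)
    exact Sum.Lex.inr_lt_inr_iff.mpr (e.lt_iff_lt.mp this)


end SumLex
end Proof13

/-- Let `P = F ⊕ L` with `F` a forest and `L` a ladder, `π` a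
linear extension of `P` and `κ ∈ P`.  Then `σ := ∂_{π⁻¹(κ)} π` is the linear
extension obtained from `π` by moving `κ` to the end and reordering the letters
`j ⪰ κ`, swapping the relative order of the incomparable pair at each size-2
ladder level above `κ`.  Concretely: `σ` is a linear extension; every letter
`a ⋡ κ` keeps its position (shifted down by one if it was after `κ`); and any
two incomparable letters `u, v ⪰ κ` appear in `σ` in the opposite relative
order to that in `π`. -/
theorem stmt13 (F L : Type) [Fintype F] [PartialOrder F] [Fintype L] [PartialOrder L]
    (hF : IsRootedForest F) (hL : IsLadder L)
    (π : Listing (F ⊕ₗ L)) (hπ : IsLinExt π) (κ : F ⊕ₗ L) :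
    IsLinExt (promo ((π.symm κ : Fin (Fintype.card (F ⊕ₗ L))) : ℕ) π) ∧
    (∀ a : F ⊕ₗ L, ¬ κ ≤ a →
      (π.symm a < π.symm κ →
        (promo ((π.symm κ : Fin (Fintype.card (F ⊕ₗ L))) : ℕ) π).symm a = π.symm a) ∧
      (π.symm κ < π.symm a →
        (((promo ((π.symm κ : Fin (Fintype.card (F ⊕ₗ L))) : ℕ) π).symm a : ℕ)
          = (π.symm a : ℕ) - 1))) ∧
    (∀ u v : F ⊕ₗ L, κ ≤ u → κ ≤ v → ¬ u ≤ v → ¬ v ≤ u →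
      ((promo ((π.symm κ : Fin (Fintype.card (F ⊕ₗ L))) : ℕ) π).symm u
          < (promo ((π.symm κ : Fin (Fintype.card (F ⊕ₗ L))) : ℕ) π).symm v
        ↔ π.symm v < π.symm u)) := by
  exact promo_main π hπ κ (sum_HP1 hF hL κ) (sum_HP2 hF hL κ)

end PromoMC
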